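/- If a shift-invariant Markov random field μ satisfies weak spatial mixing (with some vanishing rate f), then μ is measure-theoretically strong mixing: for all finite disjoint U, V ⊆ Z^d, u ∈ A^U, v ∈ A^V, μ([u] ∩ σ_{-p}([v])) → μ(u)μ(v) as ||p|| → ∞. -/

import Mathlib

open MeasureTheory

abbrev Site (d : ℕ) := Fin d → ℤ

def dist1 {d : ℕ} (p q : Site d) : ℕ := ∑ i, (p i - q i).natAbs

/-- Outer boundary of a set of sites. -/
def bd {d : ℕ} (S : Set (Site d)) : Set (Site d) :=
  {p | p ∉ S ∧ ∃ q ∈ S, dist1 p q = 1}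

/-- Cylinder set: points agreeing with `u` on `S`. -/
def cyl {d : ℕ} {A : Type*} (S : Set (Site d)) (u : Site d → A) : Set (Site d → A) :=
  {x | ∀ p ∈ S, x p = u p}

noncomputable def condR {d : ℕ} {A : Type*} [MeasurableSpace A]
    (μ : Measure (Site d → A)) (E B : Set (Site d → A)) : ℝ :=
  (μ (E ∩ B) / μ B).toReal

def ShiftInvariant {d : ℕ} {A : Type*} [MeasurableSpace A]
    (μ : Measure (Site d → A)) : Prop :=
  ∀ (t : Site d) (E : Set (Site d → A)),
    μ ((fun (x : Site d → A) (q : Site d) => x (q + t)) ⁻¹' E) = μ E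

/-- Markov random field property. -/
def IsMRF {d : ℕ} {A : Type*} [MeasurableSpace A] (μ : Measure (Site d → A)) : Prop :=
  ∀ S : Set (Site d), S.Finite → ∀ u : Site d → A,
    ∀ T : Set (Site d), T.Finite → bd S ⊆ T → Disjoint S T →
    ∀ δ : Site d → A, 0 < μ (cyl T δ) →
      condR μ (cyl S u) (cyl T δ) = condR μ (cyl S u) (cyl (bd S) δ)

/-- The support of `μ`: points all of whose cylinder sets have positive measure. -/
def mrfSupport {d : ℕ} {A : Type*} [MeasurableSpace A]
    (μ : Measure (Site d → A)) : Set (Site d → A) :=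
  {x | ∀ S : Set (Site d), S.Finite → 0 < μ (cyl S x)}

def TSSM {d : ℕ} {A : Type*} (X : Set (Site d → A)) (g : ℕ) : Prop :=
  ∀ U S V : Set (Site d), U.Finite → S.Finite → V.Finite →
    Disjoint U S → Disjoint S V → Disjoint U V →
    (∀ p ∈ U, ∀ q ∈ V, g ≤ dist1 p q) →
    ∀ u s v : Site d → A,
      (∃ x ∈ X, (∀ p ∈ U, x p = u p) ∧ (∀ p ∈ S, x p = s p)) →
      (∃ x ∈ X, (∀ p ∈ S, x p = s p) ∧ (∀ p ∈ V, x p = v p)) →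
      ∃ x ∈ X, (∀ p ∈ U, x p = u p) ∧ (∀ p ∈ S, x p = s p) ∧ ∀ p ∈ V, x p = v p

noncomputable def setD {d : ℕ} (U V : Set (Site d)) : ℕ :=
  sInf {n : ℕ | ∃ p ∈ U, ∃ q ∈ V, dist1 p q = n}

/-- Weak spatial mixing with rate `f`. -/
def WSM {d : ℕ} {A : Type*} [MeasurableSpace A]
    (μ : Measure (Site d → A)) (f : ℕ → ℝ) : Prop :=
  ∀ W : Set (Site d), W.Finite → ∀ U : Set (Site d), U ⊆ W → ∀ u : Site d → A,
    ∀ δ₁ δ₂ : Site d → A, 0 < μ (cyl (bd W) δ₁) → 0 < μ (cyl (bd W) δ₂) →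
      |condR μ (cyl U u) (cyl (bd W) δ₁) - condR μ (cyl U u) (cyl (bd W) δ₂)| ≤
        (U.ncard : ℝ) * f (setD U (bd W))

namespace WSMProof
set_option linter.unusedSectionVars false

variable {d : ℕ} {A : Type*} [Fintype A] [MeasurableSpace A]

noncomputable def atomOf (a : A) : Set A := ⋂₀ {M : Set A | MeasurableSet M ∧ a ∈ M}

lemma measurableSet_atomOf (a : A) : MeasurableSet (atomOf a) :=
  MeasurableSet.sInter (Set.to_countable _) fun _ h => h.1

lemma mem_atomOf_self (a : A) : a ∈ atomOf a :=
  Set.mem_sInter.mpr fun _ h => h.2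

lemma atomOf_subset {a : A} {M : Set A} (hM : MeasurableSet M) (ha : a ∈ M) :
    atomOf a ⊆ M := Set.sInter_subset_of_mem ⟨hM, ha⟩

lemma mem_atomOf_symm {a b : A} (h : b ∈ atomOf a) : a ∈ atomOf b := by
  refine Set.mem_sInter.mpr fun M hM => ?_
  by_contra haM
  exact (atomOf_subset hM.1.compl haM h) hM.2

lemma atomOf_eq_of_mem {a b : A} (h : b ∈ atomOf a) : atomOf b = atomOf a :=
  subset_antisymm (atomOf_subset (measurableSet_atomOf a) h)
    (atomOf_subset (measurableSet_atomOf b) (mem_atomOf_symm h))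

open Classical in
noncomputable def pick [Nonempty A] (s : Set A) : A :=
  if h : s.Nonempty then h.some else Classical.arbitrary A

lemma pick_mem [Nonempty A] {s : Set A} (h : s.Nonempty) : pick s ∈ s := by
  rw [pick, dif_pos h]; exact h.some_mem

noncomputable def rep [Nonempty A] (a : A) : A := pick (atomOf a)

lemma rep_mem [Nonempty A] (a : A) : rep a ∈ atomOf a :=
  pick_mem ⟨a, mem_atomOf_self a⟩

lemma atomOf_rep [Nonempty A] (a : A) : atomOf (rep a) = atomOf a :=
  atomOf_eq_of_mem (rep_mem a)

lemma rep_congr [Nonempty A] {a b : A} (h : atomOf a = atomOf b) : rep a = rep b := by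
  rw [rep, rep, h]

lemma rep_rep [Nonempty A] (a : A) : rep (rep a) = rep a := rep_congr (atomOf_rep a)

/-- Atom-cylinder. -/
def acyl (S : Set (Site d)) (g : Site d → A) : Set (Site d → A) :=
  {x | ∀ p ∈ S, x p ∈ atomOf (g p)}

lemma measurableSet_acyl {S : Set (Site d)} (hS : S.Countable) (g : Site d → A) :
    MeasurableSet (acyl S g) := by
  have h : acyl S g = ⋂ p ∈ S, (fun x : Site d → A => x p) ⁻¹' atomOf (g p) := by
    ext x; simp [acyl]
  rw [h]
  exact MeasurableSet.biInter hS fun p _ => measurable_pi_apply p (measurableSet_atomOf _)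

lemma cyl_congr {S : Set (Site d)} {g g' : Site d → A} (h : ∀ p ∈ S, g p = g' p) :
    cyl S g = cyl S g' := by
  ext x; constructor <;> intro hx p hp
  · rw [← h p hp]; exact hx p hp
  · rw [h p hp]; exact hx p hp

lemma acyl_congr {S : Set (Site d)} {g g' : Site d → A}
    (h : ∀ p ∈ S, atomOf (g p) = atomOf (g' p)) : acyl S g = acyl S g' := by
  ext x; constructor <;> intro hx p hp
  · rw [← h p hp]; exact hx p hp
  · rw [h p hp]; exact hx p hp

open Classical in
noncomputable def comb (S : Set (Site d)) (g h : Site d → A) : Site d → A :=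
  fun p => if p ∈ S then g p else h p

lemma comb_of_mem {S : Set (Site d)} {g h : Site d → A} {p} (hp : p ∈ S) :
    comb S g h p = g p := by simp [comb, hp]

lemma comb_of_not_mem {S : Set (Site d)} {g h : Site d → A} {p} (hp : p ∉ S) :
    comb S g h p = h p := by simp [comb, hp]

lemma cyl_union {S T : Set (Site d)} (hST : Disjoint S T) (g h : Site d → A) :
    cyl (S ∪ T) (comb S g h) = cyl S g ∩ cyl T h := by
  ext x
  constructor
  · intro hx
    refine ⟨fun p hp => ?_, fun p hp => ?_⟩
    · rw [hx p (Or.inl hp), comb_of_mem hp]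
    · rw [hx p (Or.inr hp), comb_of_not_mem (Set.disjoint_right.mp hST hp)]
  · rintro ⟨h1, h2⟩ p hp
    rcases hp with hp | hp
    · rw [comb_of_mem hp]; exact h1 p hp
    · rw [comb_of_not_mem (Set.disjoint_right.mp hST hp)]; exact h2 p hp

lemma acyl_union {S T : Set (Site d)} (hST : Disjoint S T) (g h : Site d → A) :
    acyl (S ∪ T) (comb S g h) = acyl S g ∩ acyl T h := by
  ext x
  constructor
  · intro hx
    refine ⟨fun p hp => ?_, fun p hp => ?_⟩
    · have := hx p (Or.inl hp); rwa [comb_of_mem hp] at this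
    · have := hx p (Or.inr hp); rwa [comb_of_not_mem (Set.disjoint_right.mp hST hp)] at this
  · rintro ⟨h1, h2⟩ p hp
    rcases hp with hp | hp
    · rw [comb_of_mem hp]; exact h1 p hp
    · rw [comb_of_not_mem (Set.disjoint_right.mp hST hp)]; exact h2 p hp

/-- Saturation of a set under pointwise atom-equivalence. -/
def satur (E : Set (Site d → A)) : Set (Site d → A) :=
  {y | ∃ x ∈ E, ∀ p, y p ∈ atomOf (x p)}

lemma subset_satur (E : Set (Site d → A)) : E ⊆ satur E :=
  fun x hx => ⟨x, hx, fun _ => mem_atomOf_self _⟩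

lemma meas_saturated {M : Set (Site d → A)} (hM : MeasurableSet M) :
    ∀ x ∈ M, ∀ y : Site d → A, (∀ p, y p ∈ atomOf (x p)) → y ∈ M := by
  have hM' : MeasurableSet[⨆ p : Site d,
      MeasurableSpace.comap (fun x : Site d → A => x p) inferInstance] M := hM
  clear hM
  rw [MeasurableSpace.measurableSet_iSup] at hM'
  induction hM' with
  | basic s hs =>
      obtain ⟨p, hp⟩ := hs
      rw [MeasurableSpace.measurableSet_comap] at hp
      obtain ⟨B, hB, rfl⟩ := hp
      intro x hx y hy
      exact atomOf_subset hB hx (hy p)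
  | empty => intro x hx; exact hx.elim
  | compl s _ ih =>
      intro x hx y hy hys
      exact hx (ih y hys x fun p => mem_atomOf_symm (hy p))
  | iUnion g _ ih =>
      intro x hx y hy
      obtain ⟨i, hi⟩ := Set.mem_iUnion.mp hx
      exact Set.mem_iUnion.mpr ⟨i, ih i x hi y hy⟩

lemma measure_satur (μ : Measure (Site d → A)) (E : Set (Site d → A)) :
    μ (satur E) = μ E := by
  refine le_antisymm ?_ (measure_mono (subset_satur E))
  conv_rhs => rw [measure_eq_iInf]
  refine le_iInf fun t => le_iInf fun hEt => le_iInf fun ht => ?_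
  refine measure_mono fun y hy => ?_
  obtain ⟨x, hxE, hxy⟩ := hy
  exact meas_saturated ht x (hEt hxE) y hxy

lemma satur_cyl_inter_acyl {S T : Set (Site d)} (hST : Disjoint S T) (g h : Site d → A) :
    satur (cyl S g ∩ acyl T h) = acyl S g ∩ acyl T h := by
  ext y
  constructor
  · rintro ⟨x, ⟨hxc, hxa⟩, hxy⟩
    refine ⟨fun p hp => ?_, fun p hp => ?_⟩
    · have := hxy p; rwa [hxc p hp] at this
    · have := hxy p; rwa [atomOf_eq_of_mem (hxa p hp)] at this
  · rintro ⟨hyS, hyT⟩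
    refine ⟨comb S g y, ⟨fun p hp => comb_of_mem hp, fun p hp => ?_⟩, fun p => ?_⟩
    · rw [comb_of_not_mem (Set.disjoint_right.mp hST hp)]; exact hyT p hp
    · by_cases hp : p ∈ S
      · rw [comb_of_mem hp]; exact hyS p hp
      · rw [comb_of_not_mem hp]; exact mem_atomOf_self _

lemma acyl_empty (g : Site d → A) : acyl (∅ : Set (Site d)) g = Set.univ := by
  ext x; simp [acyl]

lemma satur_cyl (S : Set (Site d)) (g : Site d → A) : satur (cyl S g) = acyl S g := by
  have h := satur_cyl_inter_acyl (S := S) (T := (∅ : Set (Site d))) (by simp) g g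
  rwa [acyl_empty, Set.inter_univ, Set.inter_univ] at h

lemma measure_acyl (μ : Measure (Site d → A)) (S : Set (Site d)) (g : Site d → A) :
    μ (acyl S g) = μ (cyl S g) := by
  rw [← measure_satur μ (cyl S g), satur_cyl]

lemma measure_cyl_inter_acyl (μ : Measure (Site d → A)) {S T : Set (Site d)}
    (hST : Disjoint S T) (g h : Site d → A) :
    μ (cyl S g ∩ acyl T h) = μ (acyl S g ∩ acyl T h) := by
  rw [← measure_satur μ (cyl S g ∩ acyl T h), satur_cyl_inter_acyl hST]

lemma measure_cyl_inter_cyl (μ : Measure (Site d → A)) {S T : Set (Site d)}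
    (hST : Disjoint S T) (g h : Site d → A) :
    μ (cyl S g ∩ cyl T h) = μ (acyl S g ∩ acyl T h) := by
  rw [← cyl_union hST, ← measure_satur μ (cyl _ _), satur_cyl, acyl_union hST]

lemma satur_decomp {U W G : Set (Site d)} (hUW : U ⊆ W) (hWG : Disjoint W G)
    {u w g : Site d → A} (hc : ∀ p ∈ U, u p ∈ atomOf (w p)) :
    satur (cyl U u ∩ cyl G g ∩ acyl W w) = acyl W w ∩ acyl G g := by
  have hUG : Disjoint U G := hWG.mono_left hUW
  ext y
  constructor
  · rintro ⟨x, ⟨⟨hxU, hxG⟩, hxW⟩, hxy⟩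
    refine ⟨fun p hp => ?_, fun p hp => ?_⟩
    · have := hxy p; rwa [atomOf_eq_of_mem (hxW p hp)] at this
    · have := hxy p; rwa [hxG p hp] at this
  · rintro ⟨hyW, hyG⟩
    refine ⟨comb U u (comb G g y), ⟨⟨fun p hp => comb_of_mem hp, fun p hp => ?_⟩,
      fun p hp => ?_⟩, fun p => ?_⟩
    · rw [comb_of_not_mem (Set.disjoint_right.mp hUG hp), comb_of_mem hp]
    · by_cases hpU : p ∈ U
      · rw [comb_of_mem hpU]; exact hc p hpU
      · rw [comb_of_not_mem hpU, comb_of_not_mem (Set.disjoint_left.mp hWG hp)]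
        exact hyW p hp
    · by_cases hpU : p ∈ U
      · rw [comb_of_mem hpU, atomOf_eq_of_mem (hc p hpU)]
        exact hyW p (hUW hpU)
      · rw [comb_of_not_mem hpU]
        by_cases hpG : p ∈ G
        · rw [comb_of_mem hpG]; exact hyG p hpG
        · rw [comb_of_not_mem hpG]; exact mem_atomOf_self _

lemma measure_decomp_step (μ : Measure (Site d → A)) {U W G : Set (Site d)}
    (hUW : U ⊆ W) (hWG : Disjoint W G) {u w g : Site d → A}
    (hc : ∀ p ∈ U, u p ∈ atomOf (w p)) :
    μ (cyl U u ∩ cyl G g ∩ acyl W w) = μ (cyl W w ∩ cyl G g) := by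
  rw [← measure_satur μ (cyl U u ∩ cyl G g ∩ acyl W w), satur_decomp hUW hWG hc,
    measure_cyl_inter_cyl μ hWG w g]

lemma measure_partition {X : Type*} [MeasurableSpace X] (μ : Measure X) {ι : Type*}
    (F : Finset ι) (C : ι → Set X) :
    ∀ S : Set X, (∀ i ∈ F, MeasurableSet (C i)) →
    (∀ i ∈ F, ∀ j ∈ F, i ≠ j → Disjoint (C i) (C j)) →
    S ⊆ (⋃ i ∈ F, C i) →
    μ S = ∑ i ∈ F, μ (S ∩ C i) := by
  classical
  induction F using Finset.induction_on with
  | empty =>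
      intro S _ _ hcov
      simp only [Finset.sum_empty]
      refine measure_mono_null ?_ measure_empty
      simpa using hcov
  | @insert a F ha ih =>
      intro S hmeas hdisj hcov
      have hmA : MeasurableSet (C a) := hmeas a (Finset.mem_insert_self a _)
      have hcov' : S \ C a ⊆ ⋃ i ∈ F, C i := by
        intro x hx
        have := hcov hx.1
        simp only [Set.mem_iUnion, Finset.mem_insert] at this ⊢
        obtain ⟨i, hi | hi, hxi⟩ := this
        · exact absurd (hi ▸ hxi) hx.2
        · exact ⟨i, hi, hxi⟩
      have key : μ (S \ C a) = ∑ i ∈ F, μ ((S \ C a) ∩ C i) :=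
        ih (S \ C a) (fun i hi => hmeas i (Finset.mem_insert_of_mem hi))
          (fun i hi j hj hij => hdisj i (Finset.mem_insert_of_mem hi) j
            (Finset.mem_insert_of_mem hj) hij) hcov'
      have hterm : ∀ i ∈ F, μ ((S \ C a) ∩ C i) = μ (S ∩ C i) := by
        intro i hi
        have hdis : Disjoint (C i) (C a) :=
          hdisj i (Finset.mem_insert_of_mem hi) a (Finset.mem_insert_self a _)
            (fun h => ha (h ▸ hi))
        congr 1
        ext x
        constructor
        · rintro ⟨⟨hxS, _⟩, hxi⟩; exact ⟨hxS, hxi⟩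
        · rintro ⟨hxS, hxi⟩
          exact ⟨⟨hxS, fun hxa => (Set.disjoint_left.mp hdis hxi) hxa⟩, hxi⟩
      calc μ S = μ (S ∩ C a) + μ (S \ C a) := (measure_inter_add_diff S hmA).symm
        _ = μ (S ∩ C a) + ∑ i ∈ F, μ ((S \ C a) ∩ C i) := by rw [key]
        _ = μ (S ∩ C a) + ∑ i ∈ F, μ (S ∩ C i) :=
            congrArg _ (Finset.sum_congr rfl hterm)
        _ = ∑ i ∈ insert a F, μ (S ∩ C i) := (Finset.sum_insert (f := fun i => μ (S ∩ C i)) ha).symm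

variable [Nonempty A]

noncomputable def pat (F : Finset (Site d)) (ρ : {p // p ∈ F} → A) : Site d → A :=
  fun p => if h : p ∈ F then ρ ⟨p, h⟩ else Classical.arbitrary A

lemma pat_mem {F : Finset (Site d)} (ρ : {p // p ∈ F} → A) {p} (h : p ∈ F) :
    pat F ρ p = ρ ⟨p, h⟩ := dif_pos h

open Classical in
noncomputable def reps (F : Finset (Site d)) : Finset ({p // p ∈ F} → A) :=
  Finset.univ.filter fun ρ => ∀ p, rep (ρ p) = ρ p

lemma mem_reps {F : Finset (Site d)} {ρ : {p // p ∈ F} → A} :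
    ρ ∈ reps F ↔ ∀ p, rep (ρ p) = ρ p := by
  simp [reps]

lemma cell_cover {F : Finset (Site d)} (x : Site d → A) :
    ∃ ρ ∈ reps F, x ∈ acyl (↑F) (pat F ρ) := by
  refine ⟨fun p => rep (x ↑p), mem_reps.mpr fun p => rep_rep _, fun p hp => ?_⟩
  have hp' : p ∈ F := hp
  rw [pat_mem _ hp', atomOf_rep]
  exact mem_atomOf_self _

lemma cell_disjoint {F : Finset (Site d)} {ρ ρ' : {p // p ∈ F} → A}
    (hρ : ρ ∈ reps F) (hρ' : ρ' ∈ reps F) (hne : ρ ≠ ρ') :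
    Disjoint (acyl (↑F) (pat F ρ)) (acyl (↑F) (pat F ρ')) := by
  rw [Set.disjoint_left]
  intro x hx hx'
  apply hne
  funext p
  have h1 : x ↑p ∈ atomOf (pat F ρ ↑p) := hx ↑p (Finset.mem_coe.mpr p.2)
  have h2 : x ↑p ∈ atomOf (pat F ρ' ↑p) := hx' ↑p (Finset.mem_coe.mpr p.2)
  rw [pat_mem _ p.2] at h1 h2
  have e1 : atomOf (ρ p) = atomOf (ρ' p) :=
    (atomOf_eq_of_mem h1).symm.trans (atomOf_eq_of_mem h2)
  rw [← mem_reps.mp hρ p, ← mem_reps.mp hρ' p]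
  exact rep_congr e1

lemma measure_eq_sum_cells (μ : Measure (Site d → A)) (F : Finset (Site d))
    (S : Set (Site d → A)) :
    μ S = ∑ ρ ∈ reps F, μ (S ∩ acyl (↑F) (pat F ρ)) := by
  refine measure_partition μ (reps F) _ S
    (fun ρ _ => measurableSet_acyl F.countable_toSet _)
    (fun ρ hρ ρ' hρ' hne => cell_disjoint hρ hρ' hne) (fun x _ => ?_)
  obtain ⟨ρ, hρ, hx⟩ := cell_cover (F := F) x
  exact Set.mem_biUnion hρ hx

open Classical in
lemma measure_cylU_decomp (μ : Measure (Site d → A)) {U W G : Set (Site d)} (hW : W.Finite)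
    (hUW : U ⊆ W) (hWG : Disjoint W G) (u g : Site d → A) :
    μ (cyl U u ∩ cyl G g) =
      ∑ ρ ∈ (reps hW.toFinset).filter
          (fun ρ => ∀ p ∈ U, u p ∈ atomOf (pat hW.toFinset ρ p)),
        μ (cyl W (pat hW.toFinset ρ) ∩ cyl G g) := by
  have hcoe : (↑hW.toFinset : Set (Site d)) = W := hW.coe_toFinset
  rw [measure_eq_sum_cells μ hW.toFinset (cyl U u ∩ cyl G g), Finset.sum_filter]
  refine Finset.sum_congr rfl fun ρ _ => ?_
  by_cases hc : ∀ p ∈ U, u p ∈ atomOf (pat hW.toFinset ρ p)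
  · rw [if_pos hc, hcoe]
    exact measure_decomp_step μ hUW hWG hc
  · rw [if_neg hc, hcoe]
    push_neg at hc
    obtain ⟨p, hpU, hpu⟩ := hc
    have hempty : cyl U u ∩ cyl G g ∩ acyl W (pat hW.toFinset ρ) = ∅ := by
      ext x
      simp only [Set.mem_inter_iff, Set.mem_empty_iff_false, iff_false]
      rintro ⟨⟨hxU, _⟩, hxW⟩
      have := hxW p (hUW hpU)
      rw [hxU p hpU] at this
      exact hpu this
    rw [hempty, measure_empty]

lemma condR_mul (μ : Measure (Site d → A)) [IsFiniteMeasure μ] (E B : Set (Site d → A)) :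
    condR μ E B * (μ B).toReal = (μ (E ∩ B)).toReal := by
  rw [condR, ENNReal.toReal_div]
  rcases eq_or_ne (μ B) 0 with h | h
  · have hEB : μ (E ∩ B) = 0 :=
      le_antisymm (h ▸ measure_mono Set.inter_subset_right) zero_le
    rw [h, hEB]
    simp
  · rw [div_mul_cancel₀]
    exact ENNReal.toReal_ne_zero.mpr ⟨h, measure_ne_top μ B⟩

lemma fact1 {μ : Measure (Site d → A)} [IsProbabilityMeasure μ] (hmrf : IsMRF μ)
    {U W Vt : Set (Site d)} (hW : W.Finite) (hUW : U ⊆ W)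
    (hVt : Vt.Finite) (hWVt : Disjoint W Vt) (hΓVt : Disjoint (bd W) Vt)
    (hΓ : (bd W).Finite) (u δh vt : Site d → A)
    (hpos : μ (cyl (bd W ∪ Vt) (comb (bd W) δh vt)) ≠ 0) :
    (μ (cyl U u ∩ cyl (bd W ∪ Vt) (comb (bd W) δh vt))).toReal =
      condR μ (cyl U u) (cyl (bd W) δh) *
        (μ (cyl (bd W ∪ Vt) (comb (bd W) δh vt))).toReal := by
  classical
  set T : Set (Site d) := bd W ∪ Vt with hT
  set δt : Site d → A := comb (bd W) δh vt with hδt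
  have hWΓ : Disjoint W (bd W) := Set.disjoint_left.mpr fun p hpW hpΓ => hpΓ.1 hpW
  have hWT : Disjoint W T := Set.disjoint_union_right.mpr ⟨hWΓ, hWVt⟩
  have hTfin : T.Finite := hΓ.union hVt
  have hTsub : cyl T δt ⊆ cyl (bd W) δh := by
    intro x hx p hp
    have := hx p (Or.inl hp)
    rwa [hδt, comb_of_mem hp] at this
  have hpos2 : μ (cyl (bd W) δh) ≠ 0 :=
    fun h0 => hpos (le_antisymm (h0 ▸ measure_mono hTsub) zero_le)
  have hd1 := measure_cylU_decomp μ hW hUW hWT u δt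
  have hd2 := measure_cylU_decomp μ hW hUW hWΓ u δh
  set P := (reps hW.toFinset).filter
    (fun ρ => ∀ p ∈ U, u p ∈ atomOf (pat hW.toFinset ρ p)) with hP
  have hne : ∀ X : Set (Site d → A), μ X ≠ ⊤ := fun X => measure_ne_top μ X
  have hmρ : ∀ ρ ∈ P, (μ (cyl W (pat hW.toFinset ρ) ∩ cyl T δt)).toReal
      = condR μ (cyl W (pat hW.toFinset ρ)) (cyl (bd W) δh) * (μ (cyl T δt)).toReal := by
    intro ρ _
    have h1 := condR_mul μ (cyl W (pat hW.toFinset ρ)) (cyl T δt)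
    have h2 := hmrf W hW (pat hW.toFinset ρ) T hTfin Set.subset_union_left hWT δt
      (pos_iff_ne_zero.mpr hpos)
    have h3 : cyl (bd W) δt = cyl (bd W) δh := cyl_congr fun p hp => comb_of_mem hp
    rw [← h1, h2, h3]
  have haρ : ∀ ρ ∈ P, (μ (cyl W (pat hW.toFinset ρ) ∩ cyl (bd W) δh)).toReal
      = condR μ (cyl W (pat hW.toFinset ρ)) (cyl (bd W) δh) * (μ (cyl (bd W) δh)).toReal :=
    fun ρ _ => (condR_mul μ _ _).symm
  have hs1 : (μ (cyl U u ∩ cyl T δt)).toReal =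
      (∑ ρ ∈ P, condR μ (cyl W (pat hW.toFinset ρ)) (cyl (bd W) δh)) *
        (μ (cyl T δt)).toReal := by
    rw [hd1, ENNReal.toReal_sum (fun ρ _ => hne _), Finset.sum_mul]
    exact Finset.sum_congr rfl hmρ
  have hs2 : (μ (cyl U u ∩ cyl (bd W) δh)).toReal =
      (∑ ρ ∈ P, condR μ (cyl W (pat hW.toFinset ρ)) (cyl (bd W) δh)) *
        (μ (cyl (bd W) δh)).toReal := by
    rw [hd2, ENNReal.toReal_sum (fun ρ _ => hne _), Finset.sum_mul]
    exact Finset.sum_congr rfl haρ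
  have hD : (μ (cyl (bd W) δh)).toReal ≠ 0 := ENNReal.toReal_ne_zero.mpr ⟨hpos2, hne _⟩
  have hc : condR μ (cyl U u) (cyl (bd W) δh) =
      ∑ ρ ∈ P, condR μ (cyl W (pat hW.toFinset ρ)) (cyl (bd W) δh) := by
    rw [condR, ENNReal.toReal_div, hs2, mul_div_cancel_right₀ _ hD]
  rw [hs1, hc]

lemma dist1_triangle (p q r : Site d) : dist1 p r ≤ dist1 p q + dist1 q r := by
  rw [dist1, dist1, dist1, ← Finset.sum_add_distrib]
  exact Finset.sum_le_sum fun i _ => by omega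

lemma dist1_symm (p q : Site d) : dist1 p q = dist1 q p := by
  rw [dist1, dist1]
  exact Finset.sum_congr rfl fun i _ => by omega

lemma ball_finite (n : ℕ) : {p : Site d | dist1 p 0 ≤ n}.Finite := by
  have hsub : {p : Site d | dist1 p 0 ≤ n} ⊆
      Set.pi Set.univ (fun _ : Fin d => {z : ℤ | z.natAbs ≤ n}) := by
    intro p hp i _
    have h1 : (p i - (0 : Site d) i).natAbs ≤ dist1 p 0 :=
      Finset.single_le_sum (f := fun j => (p j - (0 : Site d) j).natAbs)
        (fun j _ => Nat.zero_le _) (Finset.mem_univ i)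
    have h2 : dist1 p 0 ≤ n := hp
    simp only [Set.mem_setOf_eq, Pi.zero_apply] at h1 ⊢
    omega
  refine Set.Finite.subset (Set.Finite.pi fun _ => ?_) hsub
  refine (Set.finite_Icc (-(n : ℤ)) n).subset fun z hz => ?_
  simp only [Set.mem_setOf_eq] at hz
  simp only [Set.mem_Icc]
  omega

lemma final_calc {ι : Type*} (P : Finset ι) (c m b : ι → ℝ) (K α β G : ℝ)
    (hsum0 : ∑ δ ∈ P, m δ = 1)
    (hsum1 : ∑ δ ∈ P, (c δ * m δ) = α)
    (hsum2 : ∑ δ ∈ P, b δ = β)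
    (hsum3 : ∑ δ ∈ P, (c δ * b δ) = G)
    (hb0 : ∀ δ ∈ P, 0 ≤ b δ) (hm0 : ∀ δ ∈ P, 0 ≤ m δ)
    (hbm : ∀ δ ∈ P, b δ ≤ m δ)
    (hK0 : 0 ≤ K) (hβ1 : β ≤ 1)
    (hcc : ∀ δ ∈ P, ∀ δ' ∈ P, 0 < m δ → 0 < m δ' → |c δ - c δ'| ≤ K) :
    |G - α * β| ≤ K := by
  have key : ∀ δ ∈ P, 0 < m δ → |c δ - α| ≤ K := by
    intro δ hδ hmδ
    have h1 : c δ - α = ∑ δ' ∈ P, (c δ - c δ') * m δ' := by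
      rw [Finset.sum_congr rfl (fun δ' _ => sub_mul (c δ) (c δ') (m δ')),
        Finset.sum_sub_distrib, ← Finset.mul_sum, hsum0, mul_one, hsum1]
    rw [h1]
    refine (Finset.abs_sum_le_sum_abs _ _).trans ?_
    have h2 : ∀ δ' ∈ P, |(c δ - c δ') * m δ'| ≤ K * m δ' := by
      intro δ' hδ'
      rw [abs_mul, abs_of_nonneg (hm0 δ' hδ')]
      rcases eq_or_lt_of_le (hm0 δ' hδ') with h | h
      · rw [← h]; simp
      · exact mul_le_mul_of_nonneg_right (hcc δ hδ δ' hδ' hmδ h) (le_of_lt h)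
    refine (Finset.sum_le_sum h2).trans ?_
    rw [← Finset.mul_sum, hsum0, mul_one]
  have h3 : G - α * β = ∑ δ ∈ P, (c δ - α) * b δ := by
    rw [Finset.sum_congr rfl (fun δ (_ : δ ∈ P) => sub_mul (c δ) α (b δ)),
      Finset.sum_sub_distrib, ← Finset.mul_sum, hsum2, hsum3]
  rw [h3]
  refine (Finset.abs_sum_le_sum_abs _ _).trans ?_
  have h4 : ∀ δ ∈ P, |(c δ - α) * b δ| ≤ K * b δ := by
    intro δ hδ
    rw [abs_mul, abs_of_nonneg (hb0 δ hδ)]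
    rcases eq_or_lt_of_le (hb0 δ hδ) with h | h
    · rw [← h]; simp
    · have hmδ : 0 < m δ := lt_of_lt_of_le h (hbm δ hδ)
      exact mul_le_mul_of_nonneg_right (key δ hδ hmδ) (le_of_lt h)
  refine (Finset.sum_le_sum h4).trans ?_
  rw [← Finset.mul_sum, hsum2]
  calc K * β ≤ K * 1 := mul_le_mul_of_nonneg_left hβ1 hK0
    _ = K := mul_one K

end WSMProof

open WSMProof

/-- A shift-invariant MRF satisfying WSM (with some vanishing rate) is
measure-theoretically strong mixing:
`μ([u] ∩ σ_{-p}([v])) → μ(u) μ(v)` as `‖p‖ → ∞`. -/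
theorem wsm_implies_strong_mixing {d : ℕ} {A : Type*} [Fintype A] [MeasurableSpace A]
    (μ : Measure (Site d → A)) [IsProbabilityMeasure μ]
    (hinv : ShiftInvariant μ) (hmrf : IsMRF μ)
    (f : ℕ → ℝ) (hf0 : ∀ n, 0 ≤ f n)
    (hftend : Filter.Tendsto f Filter.atTop (nhds 0))
    (hwsm : WSM μ f) :
    ∀ U V : Set (Site d), U.Finite → V.Finite → Disjoint U V →
      ∀ (u v : Site d → A) (ε : ℝ), 0 < ε → ∃ N : ℕ, ∀ t : Site d, N ≤ dist1 t 0 →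
        |(μ (cyl U u ∩ {x | ∀ q ∈ V, x (q + t) = v q})).toReal -
          (μ (cyl U u)).toReal * (μ (cyl V v)).toReal| < ε := by
  intro U V hU hV hUV u v ε hε
  classical
  rcases Nat.eq_zero_or_pos d with hd0 | hd0
  · refine ⟨1, fun t ht => absurd ht ?_⟩
    subst hd0
    simp [dist1]
  have hAne : Nonempty A := by
    by_contra h
    haveI : IsEmpty A := not_nonempty_iff.mp h
    have h1 : (Set.univ : Set (Site d → A)) = ∅ :=
      Set.univ_eq_empty_iff.mpr ⟨fun x => IsEmpty.false (x 0)⟩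
    have h2 := measure_univ (μ := μ)
    rw [h1, measure_empty] at h2
    exact zero_ne_one h2
  set ε' := ε / (U.ncard + 1) with hε'def
  have hε' : 0 < ε' := by positivity
  obtain ⟨M, hM⟩ : ∃ M : ℕ, ∀ m, M ≤ m → f m < ε' :=
    Filter.eventually_atTop.mp (hftend.eventually_lt_const hε')
  obtain ⟨R, hR⟩ : ∃ R : ℕ, ∀ p ∈ U ∪ V, dist1 p 0 ≤ R := by
    obtain ⟨R, hR⟩ := ((hU.union hV).image (fun p => dist1 p 0)).bddAbove
    exact ⟨R, fun p hp => hR (Set.mem_image_of_mem _ hp)⟩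
  set n := M + R with hn
  set Wset : Set (Site d) := {p : Site d | dist1 p 0 ≤ n} with hWsetdef
  have hWfin : Wset.Finite := ball_finite n
  have hΓsub : bd Wset ⊆ {p : Site d | dist1 p 0 ≤ n + 1} := by
    rintro p ⟨hpW, q, hqW, hpq⟩
    have h1 := dist1_triangle p q 0
    have h2 : dist1 q 0 ≤ n := hqW
    simp only [Set.mem_setOf_eq]
    omega
  have hΓfin : (bd Wset).Finite := (ball_finite (n + 1)).subset hΓsub
  have hΓfar : ∀ p ∈ bd Wset, n + 1 ≤ dist1 p 0 := by
    rintro p ⟨hpW, -⟩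
    have h2 : ¬ (dist1 p 0 ≤ n) := hpW
    omega
  have hUW : U ⊆ Wset := by
    intro p hp
    have := hR p (Or.inl hp)
    simp only [hWsetdef, Set.mem_setOf_eq]
    omega
  have hWΓ : Disjoint Wset (bd Wset) := Set.disjoint_left.mpr fun p hpW hpΓ => hpΓ.1 hpW
  have hUΓ : Disjoint U (bd Wset) := hWΓ.mono_left hUW
  refine ⟨n + 2 + R, fun t ht => ?_⟩
  set Vt : Set (Site d) := (fun q => q + t) '' V with hVtdef
  have hVtfin : Vt.Finite := hV.image _
  set vt : Site d → A := fun p => v (p - t) with hvtdef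
  have hVtfar : ∀ p ∈ Vt, n + 2 ≤ dist1 p 0 := by
    rintro p ⟨q, hq, rfl⟩
    show n + 2 ≤ dist1 (q + t) 0
    have h1 := dist1_triangle t (q + t) 0
    have h2 : dist1 t (q + t) = dist1 q 0 := by
      rw [dist1, dist1]
      refine Finset.sum_congr rfl fun i _ => ?_
      have : (q + t) i = q i + t i := rfl
      rw [this]
      have h0 : (0 : Site d) i = 0 := rfl
      rw [h0]
      omega
    have h3 := hR q (Or.inr hq)
    omega
  have hWVt : Disjoint Wset Vt := Set.disjoint_left.mpr fun p hpW hpV => by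
    have h1 := hVtfar p hpV
    have h2 : dist1 p 0 ≤ n := hpW
    omega
  have hΓVt : Disjoint (bd Wset) Vt := Set.disjoint_left.mpr fun p hpΓ hpV => by
    have h1 := hVtfar p hpV
    have h2 := hΓsub hpΓ
    simp only [Set.mem_setOf_eq] at h2
    omega
  have hUVt : Disjoint U Vt := hWVt.mono_left hUW
  set B : Set (Site d → A) := {x | ∀ q ∈ V, x (q + t) = v q} with hBdef
  have hBcyl : B = cyl Vt vt := by
    ext x
    constructor
    · rintro hx p ⟨q, hq, rfl⟩
      have h1 := hx q hq
      have h2 : vt (q + t) = v q := by rw [hvtdef]; simp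
      rw [h2]
      exact h1
    · intro hx q hq
      have h1 := hx (q + t) ⟨q, hq, rfl⟩
      have h2 : vt (q + t) = v q := by rw [hvtdef]; simp
      rw [h2] at h1
      exact h1
  have hμB : μ B = μ (cyl V v) := by
    have h1 : B = (fun (x : Site d → A) (q : Site d) => x (q + t)) ⁻¹' (cyl V v) := rfl
    rw [h1, hinv t (cyl V v)]
  set K := (U.ncard : ℝ) * f (setD U (bd Wset)) with hKdef
  have hK0 : 0 ≤ K := mul_nonneg (Nat.cast_nonneg _) (hf0 _)
  have hKε : K < ε := by
    rcases Set.eq_empty_or_nonempty U with hUe | hUne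
    · rw [hKdef, hUe]
      simpa [Set.ncard_empty] using hε
    · obtain ⟨p0, hp0⟩ := hUne
      set i0 : Fin d := ⟨0, hd0⟩ with hi0
      have hsingle : ∀ z : ℤ, dist1 (fun i => if i = i0 then z else 0) 0 = z.natAbs := by
        intro z
        rw [dist1, Finset.sum_eq_single i0]
        · simp
        · intro j _ hj
          simp [hj]
        · intro h
          exact absurd (Finset.mem_univ i0) h
      set q0 : Site d := fun i => if i = i0 then ((n : ℤ) + 1) else 0 with hq0def
      set q1 : Site d := fun i => if i = i0 then (n : ℤ) else 0 with hq1def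
      have hq0d : dist1 q0 0 = n + 1 := by
        rw [hq0def, hsingle]
        omega
      have hq1d : dist1 q1 0 = n := by
        rw [hq1def, hsingle]
        omega
      have hq01 : dist1 q0 q1 = 1 := by
        rw [dist1, Finset.sum_eq_single i0]
        · rw [hq0def, hq1def]
          simp
        · intro j _ hj
          rw [hq0def, hq1def]
          simp [hj]
        · intro h
          exact absurd (Finset.mem_univ i0) h
      have hq0Γ : q0 ∈ bd Wset := by
        refine ⟨?_, q1, ?_, hq01⟩
        · simp only [hWsetdef, Set.mem_setOf_eq]
          omega
        · simp only [hWsetdef, Set.mem_setOf_eq]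
          omega
      have hDmem : setD U (bd Wset) ∈ {m : ℕ | ∃ p ∈ U, ∃ q ∈ bd Wset, dist1 p q = m} :=
        Nat.sInf_mem ⟨dist1 p0 q0, p0, hp0, q0, hq0Γ, rfl⟩
      obtain ⟨p, hp, q, hq, heq⟩ := hDmem
      have hb1 : n + 1 ≤ dist1 q 0 := hΓfar q hq
      have hb2 := dist1_triangle q p 0
      have hb3 : dist1 q p = dist1 p q := dist1_symm q p
      have hb4 : dist1 p 0 ≤ R := hR p (Or.inl hp)
      have hMd : M ≤ setD U (bd Wset) := by omega
      have hflt := hM _ hMd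
      have hcard : (0 : ℝ) < U.ncard := by
        have h1 : 0 < U.ncard := (Set.ncard_pos hU).mpr ⟨p0, hp0⟩
        exact_mod_cast h1
      calc K < (U.ncard : ℝ) * ε' := by
            rw [hKdef]
            exact mul_lt_mul_of_pos_left hflt hcard
        _ < ε := by
            rw [hε'def, div_eq_inv_mul, ← mul_assoc]
            have hlt : (U.ncard : ℝ) * ((U.ncard : ℝ) + 1)⁻¹ < 1 := by
              rw [mul_inv_lt_iff₀ (by positivity), one_mul]
              linarith
            nlinarith
  -- pattern machinery over the boundary
  set Γf : Finset (Site d) := hΓfin.toFinset with hΓfdef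
  have hcoe : (↑Γf : Set (Site d)) = bd Wset := hΓfin.coe_toFinset
  set P := reps (A := A) Γf with hPdef
  set Tset : Set (Site d) := bd Wset ∪ Vt with hTsetdef
  have hUVtΓ : Disjoint (U ∪ Vt) (bd Wset) :=
    Set.disjoint_union_left.mpr ⟨hUΓ, hΓVt.symm⟩
  -- per-pattern conversions
  have hμm : ∀ δ : {p // p ∈ Γf} → A,
      μ (Set.univ ∩ acyl (↑Γf) (pat Γf δ)) = μ (cyl (bd Wset) (pat Γf δ)) := by
    intro δ
    rw [Set.univ_inter, hcoe, measure_acyl]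
  have hμa : ∀ δ : {p // p ∈ Γf} → A,
      μ (cyl U u ∩ acyl (↑Γf) (pat Γf δ)) = μ (cyl U u ∩ cyl (bd Wset) (pat Γf δ)) := by
    intro δ
    rw [hcoe, measure_cyl_inter_acyl μ hUΓ, ← measure_cyl_inter_cyl μ hUΓ]
  have hμb : ∀ δ : {p // p ∈ Γf} → A,
      μ (B ∩ acyl (↑Γf) (pat Γf δ)) = μ (cyl Tset (comb (bd Wset) (pat Γf δ) vt)) := by
    intro δ
    rw [hBcyl, hcoe, measure_cyl_inter_acyl μ hΓVt.symm, hTsetdef, cyl_union hΓVt,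
      measure_cyl_inter_cyl μ hΓVt, Set.inter_comm]
  have hμg : ∀ δ : {p // p ∈ Γf} → A,
      μ (cyl U u ∩ B ∩ acyl (↑Γf) (pat Γf δ)) =
        μ (cyl U u ∩ cyl Tset (comb (bd Wset) (pat Γf δ) vt)) := by
    intro δ
    have hset : cyl U u ∩ cyl Tset (comb (bd Wset) (pat Γf δ) vt) =
        cyl (U ∪ Vt) (comb U u vt) ∩ cyl (bd Wset) (pat Γf δ) := by
      rw [hTsetdef, cyl_union hΓVt, cyl_union hUVt]
      ext x
      simp only [Set.mem_inter_iff]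
      tauto
    rw [hBcyl, hcoe, ← cyl_union hUVt, measure_cyl_inter_acyl μ hUVtΓ, hset,
      measure_cyl_inter_cyl μ hUVtΓ]
  -- sums
  have hne : ∀ X : Set (Site d → A), μ X ≠ ⊤ := fun X => measure_ne_top μ X
  have hsum0 : ∑ δ ∈ P, (μ (cyl (bd Wset) (pat Γf δ))).toReal = 1 := by
    have h1 := measure_eq_sum_cells μ Γf Set.univ
    rw [measure_univ, Finset.sum_congr rfl (fun δ _ => hμm δ)] at h1
    have h2 := congrArg ENNReal.toReal h1
    rw [ENNReal.toReal_one, ENNReal.toReal_sum (fun δ _ => hne _)] at h2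
    exact h2.symm
  have hsum1 : ∑ δ ∈ P, (condR μ (cyl U u) (cyl (bd Wset) (pat Γf δ)) *
      (μ (cyl (bd Wset) (pat Γf δ))).toReal) = (μ (cyl U u)).toReal := by
    have h1 := measure_eq_sum_cells μ Γf (cyl U u)
    rw [Finset.sum_congr rfl (fun δ _ => hμa δ)] at h1
    have h2 := congrArg ENNReal.toReal h1
    rw [ENNReal.toReal_sum (fun δ _ => hne _)] at h2
    rw [Finset.sum_congr rfl
      (fun δ _ => condR_mul μ (cyl U u) (cyl (bd Wset) (pat Γf δ)))]
    exact h2.symm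
  have hsum2 : ∑ δ ∈ P, (μ (cyl Tset (comb (bd Wset) (pat Γf δ) vt))).toReal =
      (μ (cyl V v)).toReal := by
    have h1 := measure_eq_sum_cells μ Γf B
    rw [hμB, Finset.sum_congr rfl (fun δ _ => hμb δ)] at h1
    have h2 := congrArg ENNReal.toReal h1
    rw [ENNReal.toReal_sum (fun δ _ => hne _)] at h2
    exact h2.symm
  have hsum3 : ∑ δ ∈ P, (condR μ (cyl U u) (cyl (bd Wset) (pat Γf δ)) *
      (μ (cyl Tset (comb (bd Wset) (pat Γf δ) vt))).toReal) =
      (μ (cyl U u ∩ B)).toReal := by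
    have h1 := measure_eq_sum_cells μ Γf (cyl U u ∩ B)
    rw [Finset.sum_congr rfl (fun δ _ => hμg δ)] at h1
    have h2 := congrArg ENNReal.toReal h1
    rw [ENNReal.toReal_sum (fun δ _ => hne _)] at h2
    rw [h2]
    refine Finset.sum_congr rfl fun δ _ => ?_
    by_cases hz : μ (cyl Tset (comb (bd Wset) (pat Γf δ) vt)) = 0
    · have hzz : μ (cyl U u ∩ cyl Tset (comb (bd Wset) (pat Γf δ) vt)) = 0 :=
        le_antisymm (hz ▸ measure_mono Set.inter_subset_right) zero_le
      rw [hz, hzz]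
      simp
    · have := fact1 hmrf hWfin hUW hVtfin hWVt hΓVt hΓfin u (pat Γf δ) vt
        (by rw [← hTsetdef]; exact hz)
      rw [← hTsetdef] at this
      exact this.symm
  -- remaining hypotheses for final_calc
  have hbm : ∀ δ ∈ P, (μ (cyl Tset (comb (bd Wset) (pat Γf δ) vt))).toReal ≤
      (μ (cyl (bd Wset) (pat Γf δ))).toReal := by
    intro δ _
    refine ENNReal.toReal_mono (hne _) (measure_mono ?_)
    intro x hx p hp
    have h1 := hx p (Or.inl hp)
    rwa [comb_of_mem hp] at h1
  have hcc : ∀ δ ∈ P, ∀ δ' ∈ P, 0 < (μ (cyl (bd Wset) (pat Γf δ))).toReal →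
      0 < (μ (cyl (bd Wset) (pat Γf δ'))).toReal →
      |condR μ (cyl U u) (cyl (bd Wset) (pat Γf δ)) -
        condR μ (cyl U u) (cyl (bd Wset) (pat Γf δ'))| ≤ K := by
    intro δ _ δ' _ h1 h2
    have hp1 : 0 < μ (cyl (bd Wset) (pat Γf δ)) := by
      rcases eq_or_ne (μ (cyl (bd Wset) (pat Γf δ))) 0 with h | h
      · rw [h] at h1; simp at h1
      · exact pos_iff_ne_zero.mpr h
    have hp2 : 0 < μ (cyl (bd Wset) (pat Γf δ')) := by
      rcases eq_or_ne (μ (cyl (bd Wset) (pat Γf δ'))) 0 with h | h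
      · rw [h] at h2; simp at h2
      · exact pos_iff_ne_zero.mpr h
    exact hwsm Wset hWfin U hUW u (pat Γf δ) (pat Γf δ') hp1 hp2
  have hβ1 : (μ (cyl V v)).toReal ≤ 1 := by
    rw [← ENNReal.toReal_one]
    exact ENNReal.toReal_mono ENNReal.one_ne_top prob_le_one
  have hfinal := final_calc P
    (fun δ => condR μ (cyl U u) (cyl (bd Wset) (pat Γf δ)))
    (fun δ => (μ (cyl (bd Wset) (pat Γf δ))).toReal)
    (fun δ => (μ (cyl Tset (comb (bd Wset) (pat Γf δ) vt))).toReal)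
    K (μ (cyl U u)).toReal (μ (cyl V v)).toReal (μ (cyl U u ∩ B)).toReal
    hsum0 hsum1 hsum2 hsum3
    (fun δ _ => ENNReal.toReal_nonneg) (fun δ _ => ENNReal.toReal_nonneg)
    hbm hK0 hβ1 hcc
  exact lt_of_le_of_lt hfinal hKε
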